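/- For every integer k ≥ 1, 4 ∫_0^1 x^(1+k)/(1+x^2)^2 dx = 2k ∑_{n=0}^∞ (−1)^n/(2n+k) − 1. -/

import Mathlib

open Filter intervalIntegral

private lemma cont1 (p : ℕ) : Continuous (fun x : ℝ => x ^ p / (1 + x ^ 2)) :=
  (continuous_pow p).div (by continuity) (fun x => by positivity)

private lemma cont2 (p : ℕ) : Continuous (fun x : ℝ => x ^ p / (1 + x ^ 2) ^ 2) :=
  (continuous_pow p).div (by continuity) (fun x => by positivity)

private lemma geom_id (m : ℕ) (x : ℝ) : ∀ N : ℕ,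
    ∑ n ∈ Finset.range N, (-1:ℝ)^n * x ^ (2*n+m) =
      (x ^ m - (-1:ℝ)^N * x ^ (2*N+m)) / (1 + x^2) := by
  have hx : (1:ℝ) + x^2 ≠ 0 := by positivity
  intro N
  induction N with
  | zero => simp
  | succ N ih =>
    rw [Finset.sum_range_succ, ih]
    field_simp
    ring

private lemma partial_sum_eq (m N : ℕ) :
    ∑ n ∈ Finset.range N, (-1:ℝ)^n / (2*n + m + 1) =
      (∫ x in (0:ℝ)..1, x^m / (1+x^2))
        - (-1:ℝ)^N * ∫ x in (0:ℝ)..1, x^(2*N+m) / (1+x^2) := by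
  have h1 : ∀ n : ℕ, (-1:ℝ)^n / (2*(n:ℝ) + m + 1)
      = ∫ x in (0:ℝ)..1, (-1:ℝ)^n * x ^ (2*n+m) := by
    intro n
    rw [intervalIntegral.integral_const_mul, integral_pow]
    rw [one_pow, zero_pow (by omega)]
    push_cast
    ring
  calc ∑ n ∈ Finset.range N, (-1:ℝ)^n / (2*n + m + 1)
      = ∑ n ∈ Finset.range N, ∫ x in (0:ℝ)..1, (-1:ℝ)^n * x ^ (2*n+m) := by
        exact Finset.sum_congr rfl (fun n _ => h1 n)
    _ = ∫ x in (0:ℝ)..1, ∑ n ∈ Finset.range N, (-1:ℝ)^n * x ^ (2*n+m) := by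
        rw [intervalIntegral.integral_finset_sum]
        intro n _
        exact ((continuous_const.mul (continuous_pow _)).intervalIntegrable _ _)
    _ = ∫ x in (0:ℝ)..1, (x^m / (1+x^2) - (-1:ℝ)^N * (x^(2*N+m) / (1+x^2))) := by
        apply intervalIntegral.integral_congr
        intro x _
        simp only [geom_id m x N]
        rw [sub_div, mul_div_assoc]
    _ = _ := by
        rw [intervalIntegral.integral_sub ((cont1 m).intervalIntegrable _ _)
          ((show Continuous (fun x : ℝ => (-1:ℝ)^N * (x^(2*N+m) / (1+x^2))) from
            continuous_const.mul (cont1 (2*N+m))).intervalIntegrable _ _),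
          intervalIntegral.integral_const_mul]

private lemma tendsto_partial (m : ℕ) :
    Tendsto (fun N => ∑ n ∈ Finset.range N, (-1:ℝ)^n / (2*n + m + 1)) atTop
      (nhds (∫ x in (0:ℝ)..1, x^m / (1+x^2))) := by
  set L := ∫ x in (0:ℝ)..1, x^m / (1+x^2) with hL
  have key : ∀ N : ℕ, ‖(∑ n ∈ Finset.range N, (-1:ℝ)^n / (2*n + m + 1)) - L‖
      ≤ 1 / ((N:ℝ) + 1) := by
    intro N
    rw [partial_sum_eq m N]
    have hInn : (0:ℝ) ≤ ∫ x in (0:ℝ)..1, x^(2*N+m) / (1+x^2) := by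
      apply intervalIntegral.integral_nonneg (by norm_num)
      intro x hx
      have : (0:ℝ) ≤ x := hx.1
      positivity
    have hIub : (∫ x in (0:ℝ)..1, x^(2*N+m) / (1+x^2)) ≤ 1 / ((N:ℝ) + 1) := by
      calc (∫ x in (0:ℝ)..1, x^(2*N+m) / (1+x^2))
          ≤ ∫ x in (0:ℝ)..1, x^(2*N+m) := by
            apply intervalIntegral.integral_mono_on (by norm_num)
              ((cont1 _).intervalIntegrable _ _)
              ((continuous_pow _).intervalIntegrable _ _)
            intro x hx
            rw [div_le_iff₀ (by positivity)]
            nlinarith [pow_nonneg hx.1 (2*N+m), sq_nonneg x]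
        _ = 1 / (2*N+m+1) := by
            rw [integral_pow, one_pow, zero_pow (by omega)]
            push_cast
            ring
        _ ≤ 1 / ((N:ℝ) + 1) := by
            apply one_div_le_one_div_of_le (by positivity)
            push_cast
            linarith
    have heq : L - ((-1:ℝ)^N * ∫ x in (0:ℝ)..1, x^(2*N+m) / (1+x^2)) - L
        = -((-1:ℝ)^N * ∫ x in (0:ℝ)..1, x^(2*N+m) / (1+x^2)) := by ring
    rw [heq, norm_neg, norm_mul, norm_pow, norm_neg, norm_one, one_pow, one_mul,
      Real.norm_eq_abs, abs_of_nonneg hInn]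
    exact hIub
  have h0 : Tendsto (fun N : ℕ => (∑ n ∈ Finset.range N, (-1:ℝ)^n / (2*n + m + 1)) - L)
      atTop (nhds 0) := by
    apply squeeze_zero_norm key
    exact tendsto_one_div_add_atTop_nhds_zero_nat
  have := h0.add (tendsto_const_nhds (x := L))
  simpa using this

private lemma ftc_lemma (m : ℕ) :
    (∫ x in (0:ℝ)..1, (2*((m:ℝ)+1) * (x^m/(1+x^2)) - 4 * (x^(m+2)/(1+x^2)^2))) = 1 := by
  have h : ∀ x ∈ Set.uIcc (0:ℝ) 1, HasDerivAt (fun x : ℝ => 2*x^(m+1)/(1+x^2))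
      (2*((m:ℝ)+1) * (x^m/(1+x^2)) - 4 * (x^(m+2)/(1+x^2)^2)) x := by
    intro x _
    have hx : (1:ℝ) + x^2 ≠ 0 := by positivity
    have h1 : HasDerivAt (fun x : ℝ => 2*x^(m+1)) (2*((m:ℝ)+1)*x^m) x := by
      have := (hasDerivAt_pow (m+1) x).const_mul (2:ℝ)
      refine this.congr_deriv ?_
      push_cast
      ring_nf
    have h2 : HasDerivAt (fun x : ℝ => 1 + x^2) (2*x) x := by
      have := (hasDerivAt_pow 2 x).const_add (1:ℝ)
      simpa using this
    have hdiv := h1.div h2 hx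
    refine hdiv.congr_deriv ?_
    field_simp
    ring
  rw [intervalIntegral.integral_eq_sub_of_hasDerivAt h]
  · norm_num
  · apply Continuous.intervalIntegrable
    exact (continuous_const.mul (cont1 m)).sub (continuous_const.mul (cont2 (m+2)))

theorem stmt_4 (k : ℕ) (hk : 1 ≤ k) :
    Filter.Tendsto
      (fun N => 2 * (k:ℝ) * ∑ n ∈ Finset.range N, (-1:ℝ)^n / (2*n + k) - 1)
      Filter.atTop
      (nhds (4 * ∫ x in (0:ℝ)..1, x^(1 + k) / (1 + x^2)^2)) := by
  obtain ⟨m, rfl⟩ : ∃ m, k = m + 1 := ⟨k - 1, (Nat.succ_pred_eq_of_pos hk).symm⟩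
  set L := ∫ x in (0:ℝ)..1, x^m / (1+x^2) with hL
  have hexp : 1 + (m + 1) = m + 2 := by omega
  have hval : 4 * (∫ x in (0:ℝ)..1, x^(1+(m+1)) / (1 + x^2)^2)
      = 2 * ((m:ℝ)+1) * L - 1 := by
    have hsplit : (∫ x in (0:ℝ)..1, (2*((m:ℝ)+1) * (x^m/(1+x^2)) - 4 * (x^(m+2)/(1+x^2)^2)))
        = 2*((m:ℝ)+1) * L - 4 * ∫ x in (0:ℝ)..1, x^(m+2)/(1+x^2)^2 := by
      rw [intervalIntegral.integral_sub ((show Continuous (fun x : ℝ => 2*((m:ℝ)+1) * (x^m/(1+x^2))) from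
          continuous_const.mul (cont1 m)).intervalIntegrable _ _)
        ((show Continuous (fun x : ℝ => 4 * (x^(m+2)/(1+x^2)^2)) from
          continuous_const.mul (cont2 (m+2))).intervalIntegrable _ _),
        intervalIntegral.integral_const_mul, intervalIntegral.integral_const_mul]
    have := ftc_lemma m
    rw [hsplit] at this
    rw [hexp]
    linarith
  rw [hval]
  have ht : Tendsto (fun N => 2 * ((m:ℝ)+1) *
      (∑ n ∈ Finset.range N, (-1:ℝ)^n / (2*n + m + 1)) - 1) atTop
      (nhds (2 * ((m:ℝ)+1) * L - 1)) :=
    ((tendsto_partial m).const_mul _).sub_const 1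
  have hsum : ∀ N : ℕ, ∑ n ∈ Finset.range N, (-1:ℝ)^n / (2*(n:ℝ) + ((m:ℝ)+1))
      = ∑ n ∈ Finset.range N, (-1:ℝ)^n / (2*(n:ℝ) + (m:ℝ) + 1) :=
    fun N => Finset.sum_congr rfl fun n _ => by ring
  convert ht using 2 with N
  push_cast
  rw [hsum N]
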